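/- Combined robustness bound: Let C̄_a be a finite multiset of points in ℝ^r of cardinality m ≤ (1+δ)K containing a sub-multiset S ⊆ C̄_a with |S| ≥ pK points each satisfying ‖z - A*_a‖ ≤ Q for some Q ≥ 0, where p ∈ (1/2 + δ/2, 1] and δ ≥ 0. Then the geometric median ḡ of C̄_a satisfies ‖ḡ - A*_a‖ ≤ (2p/(2p - 1 - δ)) · Q. -/

import Mathlib

open Finset

/-- Combined robustness bound for the geometric median of an estimated cluster. -/
theorem stmt_10 {r m K : ℕ} (hK : 0 < K)
    (x : Fin m → EuclideanSpace ℝ (Fin r)) (Aa g : EuclideanSpace ℝ (Fin r))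
    (δ Q p : ℝ) (hδ : 0 ≤ δ) (hQ : 0 ≤ Q)
    (hm : (m : ℝ) ≤ (1 + δ) * K)
    (S : Finset (Fin m)) (hScard : p * K ≤ (S.card : ℝ))
    (hSgood : ∀ i ∈ S, ‖x i - Aa‖ ≤ Q)
    (hp : 1 / 2 + δ / 2 < p) (hp1 : p ≤ 1)
    (hg : ∀ y : EuclideanSpace ℝ (Fin r), ∑ i, ‖g - x i‖ ≤ ∑ i, ‖y - x i‖) :
    ‖g - Aa‖ ≤ (2 * p) / (2 * p - 1 - δ) * Q := by
  set D := ‖g - Aa‖ with hDdef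
  have hD0 : 0 ≤ D := norm_nonneg _
  set s := (S.card : ℝ) with hsdef
  -- per-term lower bound on ‖g - x i‖
  have key : ∀ i : Fin m,
      ‖Aa - x i‖ - D + (if i ∈ S then 2 * D - 2 * Q else 0) ≤ ‖g - x i‖ := by
    intro i
    by_cases h : i ∈ S
    · simp only [h, if_true]
      have h1 : ‖x i - Aa‖ ≤ Q := hSgood i h
      have h2 : D ≤ ‖g - x i‖ + ‖x i - Aa‖ := by
        calc D = ‖(g - x i) + (x i - Aa)‖ := by rw [sub_add_sub_cancel]
          _ ≤ ‖g - x i‖ + ‖x i - Aa‖ := norm_add_le _ _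
      have h3 : ‖Aa - x i‖ = ‖x i - Aa‖ := norm_sub_rev _ _
      linarith
    · simp only [h, if_false]
      have h2 : ‖Aa - x i‖ ≤ ‖Aa - g‖ + ‖g - x i‖ := by
        calc ‖Aa - x i‖ = ‖(Aa - g) + (g - x i)‖ := by rw [sub_add_sub_cancel]
          _ ≤ ‖Aa - g‖ + ‖g - x i‖ := norm_add_le _ _
      have h3 : ‖Aa - g‖ = D := norm_sub_rev _ _
      linarith
  have hsum : ∑ i, (‖Aa - x i‖ - D + (if i ∈ S then 2 * D - 2 * Q else 0))
      ≤ ∑ i, ‖Aa - x i‖ :=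
    le_trans (Finset.sum_le_sum fun i _ => key i) (hg Aa)
  have hsum2 : ∑ i, (‖Aa - x i‖ - D + (if i ∈ S then 2 * D - 2 * Q else 0))
      = (∑ i, ‖Aa - x i‖) - m * D + s * (2 * D - 2 * Q) := by
    rw [Finset.sum_add_distrib, Finset.sum_sub_distrib, Finset.sum_const,
      Finset.card_univ, Fintype.card_fin]
    have : ∑ i, (if i ∈ S then 2 * D - 2 * Q else 0)
        = ∑ i ∈ S, (2 * D - 2 * Q) := by
      rw [Finset.sum_ite_mem, Finset.univ_inter]
    rw [this, Finset.sum_const, nsmul_eq_mul, nsmul_eq_mul]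
  have hmain : s * (2 * D - 2 * Q) ≤ m * D := by
    rw [hsum2] at hsum; linarith
  -- arithmetic
  have hKpos : (0 : ℝ) < K := by exact_mod_cast hK
  have hden : 0 < 2 * p - 1 - δ := by linarith
  have h2sm : (2 * p - 1 - δ) * K ≤ 2 * s - m := by nlinarith
  have h2smpos : 0 < 2 * s - m := lt_of_lt_of_le (by positivity) h2sm
  have hA : D * (2 * s - m) ≤ 2 * s * Q := by nlinarith
  have hB : 2 * p * m ≤ 2 * s * (1 + δ) := by nlinarith
  rw [div_mul_eq_mul_div, le_div_iff₀ hden]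
  have h1 : D * (2 * p - 1 - δ) * (2 * s - m) ≤ 2 * s * Q * (2 * p - 1 - δ) := by
    nlinarith
  have h2 : 2 * s * Q * (2 * p - 1 - δ) ≤ 2 * p * Q * (2 * s - m) := by nlinarith
  exact (mul_le_mul_iff_left₀ h2smpos).mp (h1.trans h2)
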